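/- Let B(α,η) = ((S+1)/η) log(K/α) + ((T−S)/η) log(1/(1−α)) + ηT/8 with K ≥ 2, 1 ≤ S ≤ T. Choosing α = S/T and η = √(8(S+1)log(KT/S)/T) (or any comparable tuning), one obtains B(α,η) = O(√(S T log T)), i.e., there is a universal constant C such that inf_{α∈(0,1), η>0} B(α,η) ≤ C √(S T log(KT)). -/

import Mathlib

set_option maxHeartbeats 1600000


/-- **Tuning of the fixed-share bound.** Let
`B(α,η) = ((S+1)/η) log(K/α) + ((T−S)/η) log(1/(1−α)) + ηT/8` with `K ≥ 2` and
`1 ≤ S ≤ T`. There is a universal constant `C` such that, for a suitable choice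
of `α ∈ (0,1)` and `η > 0`,
`B(α,η) ≤ C √(S T log(K T))`; in particular
`inf_{α∈(0,1), η>0} B(α,η) = O(√(S T log T))`. -/
theorem fixed_share_bound_tuning :
    ∃ C : ℝ, 0 < C ∧ ∀ (K T S : ℕ), 2 ≤ K → 1 ≤ S → S ≤ T →
      ∃ (α η : ℝ), α ∈ Set.Ioo (0 : ℝ) 1 ∧ 0 < η ∧
        ((S + 1 : ℝ) / η) * Real.log (K / α)
            + ((T - S : ℝ) / η) * Real.log (1 / (1 - α))
            + η * T / 8
          ≤ C * Real.sqrt ((S : ℝ) * T * Real.log ((K : ℝ) * T)) := by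
  refine ⟨3, by norm_num, ?_⟩
  intro K T S hK hS hST
  have hk : (2:ℝ) ≤ K := by exact_mod_cast hK
  have hs : (1:ℝ) ≤ S := by exact_mod_cast hS
  have hst : (S:ℝ) ≤ T := by exact_mod_cast hST
  have ht : (1:ℝ) ≤ T := le_trans hs hst
  have ht0 : (0:ℝ) < T := by linarith
  have hs0 : (0:ℝ) < S := by linarith
  set L := Real.log ((K:ℝ) * T) with hLdef
  have hL2 : Real.log 2 ≤ L := by
    apply Real.log_le_log (by norm_num)
    nlinarith
  have hlog2 : (1/2:ℝ) ≤ Real.log 2 := by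
    have := Real.log_two_gt_d9
    linarith
  have hL0 : (0:ℝ) < L := by linarith
  have hLhalf : (1/2:ℝ) ≤ L := by linarith
  set α := (S:ℝ) / (2*T) with hαdef
  have hα0 : 0 < α := div_pos hs0 (by linarith)
  have hα2 : α ≤ 1/2 := by
    rw [hαdef, div_le_iff₀ (by linarith)]
    linarith
  have hα1 : α < 1 := by linarith
  set η := Real.sqrt (8*(S:ℝ)*L/T) with hηdef
  have hη0 : 0 < η := Real.sqrt_pos.mpr (by positivity)
  have hηsq : η^2 = 8*(S:ℝ)*L/T := Real.sq_sqrt (by positivity)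
  have hηsq' : η^2 * T = 8*(S:ℝ)*L := by
    rw [hηsq]; field_simp
  clear_value L α η
  refine ⟨α, η, ⟨hα0, hα1⟩, hη0, ?_⟩
  -- bound on log(K/α)
  have hA1 : Real.log ((K:ℝ)/α) ≤ 2*L := by
    have h1 : (K:ℝ)/α ≤ 2*K*T := by
      rw [div_le_iff₀ hα0, hαdef,
        show (2:ℝ)*K*T*((S:ℝ)/(2*T)) = (K:ℝ)*S*((2*T)/(2*T)) by ring,
        div_self (by positivity : (2:ℝ)*T ≠ 0)]
      nlinarith
    have h2 : Real.log ((K:ℝ)/α) ≤ Real.log (2*(K:ℝ)*T) :=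
      Real.log_le_log (div_pos (by linarith) hα0) h1
    have h3 : Real.log (2*(K:ℝ)*T) = Real.log 2 + L := by
      rw [show (2:ℝ)*(K:ℝ)*T = 2*((K:ℝ)*T) by ring,
        Real.log_mul (by norm_num) (by positivity), hLdef]
    linarith
  have hA1nn : 0 ≤ Real.log ((K:ℝ)/α) := by
    apply Real.log_nonneg
    rw [le_div_iff₀ hα0]
    linarith
  -- bound on log(1/(1-α))
  have hA2 : Real.log (1/(1-α)) ≤ (S:ℝ)/T := by
    have h1 := Real.log_le_sub_one_of_pos (show (0:ℝ) < 1/(1-α) by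
      apply div_pos one_pos; linarith)
    have h2 : 1/(1-α) - 1 ≤ 2*α := by
      rw [div_sub' (by linarith : (1:ℝ)-α ≠ 0), div_le_iff₀ (by linarith)]
      nlinarith
    have h3 : 2*α = (S:ℝ)/T := by
      rw [hαdef]; field_simp
    linarith
  have hA2nn : 0 ≤ Real.log (1/(1-α)) := by
    apply Real.log_nonneg
    rw [le_div_iff₀ (by linarith)]
    linarith
  -- numerator bound
  have hTS : ((T:ℝ)-S) * ((S:ℝ)/T) ≤ S := by
    rw [mul_comm, div_mul_eq_mul_div, div_le_iff₀ ht0]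
    nlinarith
  have hnum : ((S:ℝ)+1) * Real.log ((K:ℝ)/α) + ((T:ℝ)-S) * Real.log (1/(1-α))
      ≤ 6*(S:ℝ)*L := by
    have e1 : ((S:ℝ)+1) * Real.log ((K:ℝ)/α) ≤ ((S:ℝ)+1) * (2*L) :=
      mul_le_mul_of_nonneg_left hA1 (by linarith)
    have e2 : ((T:ℝ)-S) * Real.log (1/(1-α)) ≤ (S:ℝ) :=
      le_trans (mul_le_mul_of_nonneg_left hA2 (by linarith)) hTS
    have e3 : 0 ≤ L * ((S:ℝ)-1) := mul_nonneg hL0.le (by linarith)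
    have e4 : 0 ≤ (S:ℝ) * (2*L-1) := mul_nonneg hs0.le (by linarith)
    ring_nf at e1 e2 e3 e4 ⊢
    linarith [e1, e2, e3, e4]
  -- last term
  have hη8 : η*T/8 = (S:ℝ)*L/η := by
    rw [div_eq_div_iff (by norm_num) hη0.ne']
    linear_combination hηsq'
  -- combine
  have hmain : ((S:ℝ) + 1) / η * Real.log ((K:ℝ) / α)
      + ((T:ℝ) - S) / η * Real.log (1 / (1 - α)) + η * T / 8
      ≤ 7*(S:ℝ)*L/η := by
    have heq : ((S:ℝ) + 1) / η * Real.log ((K:ℝ) / α)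
        + ((T:ℝ) - S) / η * Real.log (1 / (1 - α))
        = (((S:ℝ)+1) * Real.log ((K:ℝ)/α) + ((T:ℝ)-S) * Real.log (1/(1-α)))/η := by
      ring
    rw [heq, hη8]
    have h6 : (((S:ℝ)+1) * Real.log ((K:ℝ)/α) + ((T:ℝ)-S) * Real.log (1/(1-α)))/η
        ≤ 6*(S:ℝ)*L/η := by gcongr
    linarith [h6, (by ring : 6*(S:ℝ)*L/η + (S:ℝ)*L/η = 7*(S:ℝ)*L/η)]
  -- final comparison with the sqrt
  have hfin : 7*(S:ℝ)*L/η ≤ 3 * Real.sqrt ((S:ℝ)*T*L) := by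
    have h9 : (3:ℝ) * Real.sqrt ((S:ℝ)*T*L) = Real.sqrt (9*((S:ℝ)*T*L)) := by
      rw [Real.sqrt_mul (by norm_num : (0:ℝ) ≤ 9),
        show Real.sqrt 9 = 3 from by
          rw [show (9:ℝ) = 3^2 by norm_num, Real.sqrt_sq (by norm_num : (0:ℝ) ≤ 3)]]
    have hSL : (0:ℝ) < (S:ℝ)*L := mul_pos hs0 hL0
    rw [h9, show (7*(S:ℝ)*L/η) = Real.sqrt ((7*(S:ℝ)*L/η)^2) from
      (Real.sqrt_sq (div_nonneg (by nlinarith) hη0.le)).symm]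
    apply Real.sqrt_le_sqrt
    rw [div_pow, hηsq, div_le_iff₀ (div_pos (by nlinarith) ht0)]
    rw [show 9*((S:ℝ)*T*L) * (8*(S:ℝ)*L/T) = 72*((S:ℝ)*L)^2 * (T/T) by ring,
      div_self (ne_of_gt ht0)]
    nlinarith [sq_nonneg ((S:ℝ)*L)]
  calc ((S:ℝ) + 1) / η * Real.log ((K:ℝ) / α)
      + ((T:ℝ) - S) / η * Real.log (1 / (1 - α)) + η * T / 8
      ≤ 7*(S:ℝ)*L/η := hmain
    _ ≤ 3 * Real.sqrt ((S:ℝ)*T*L) := hfin
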